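/- Let k, l ≥ 1 and let (α_{ij})_{1≤i,j≤k} be a k-frame in M_{kl}(ℂ). Then there exists an invertible matrix g ∈ GL_{kl}(ℂ) such that α_{ij} = g·(E_{ij} ⊗ 1_l)·g⁻¹ for all 1 ≤ i,j ≤ k, where E_{ij} ⊗ 1_l is the Kronecker product of the matrix unit E_{ij} ∈ M_k(ℂ) with the identity matrix 1_l ∈ M_l(ℂ). (In other words, the group GL_{kl}(ℂ) acts transitively by conjugation on the set of k-frames in M_{kl}(ℂ).) -/

import Mathlib

open Matrix Kronecker

private lemma matSum_mulVec {n m ι : Type*} [Fintype m] [DecidableEq m] (s : Finset ι)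
    (M : ι → Matrix n m ℂ) (v : m → ℂ) :
    (∑ i ∈ s, M i) *ᵥ v = ∑ i ∈ s, M i *ᵥ v := by
  ext p
  simp [mulVec, dotProduct, Matrix.sum_apply, Finset.sum_mul]
  rw [Finset.sum_comm]

private lemma mulVec_matSum {n m ι : Type*} [Fintype m] [DecidableEq m]
    (s : Finset ι) (M : Matrix n m ℂ) (v : ι → m → ℂ) :
    M *ᵥ (∑ i ∈ s, v i) = ∑ i ∈ s, M *ᵥ v i := by
  ext p
  simp [mulVec, dotProduct, Finset.sum_apply, Finset.mul_sum]
  rw [Finset.sum_comm]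

/-- `GL_{kl}(ℂ)` acts transitively by conjugation on k-frames in `M_{kl}(ℂ)`: any k-frame
`(α i j)` is conjugate to the standard k-frame `(E_{ij} ⊗ 1_l)` of Kronecker products of
matrix units with the identity. Here `M_{kl}(ℂ)` is realized with index type
`Fin k × Fin l`. -/
theorem stmt_5 (k l : ℕ) (hk : 1 ≤ k) (hl : 1 ≤ l)
    (α : Fin k → Fin k → Matrix (Fin k × Fin l) (Fin k × Fin l) ℂ)
    (hli : LinearIndependent ℂ (fun p : Fin k × Fin k => α p.1 p.2))
    (hmul : ∀ i j r s : Fin k, α i j * α r s = if j = r then α i s else 0)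
    (hsum : ∑ i : Fin k, α i i = 1) :
    ∃ g : (Matrix (Fin k × Fin l) (Fin k × Fin l) ℂ)ˣ,
      ∀ i j : Fin k,
        α i j = (g : Matrix (Fin k × Fin l) (Fin k × Fin l) ℂ) *
            (Matrix.single i j 1 ⊗ₖ (1 : Matrix (Fin l) (Fin l) ℂ)) *
            ((g⁻¹ : (Matrix (Fin k × Fin l) (Fin k × Fin l) ℂ)ˣ) :
              Matrix (Fin k × Fin l) (Fin k × Fin l) ℂ) := by
  classical
  have hk0 : k ≠ 0 := by omega
  set i₀ : Fin k := ⟨0, hk⟩ with hi₀def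
  set P : Matrix (Fin k × Fin l) (Fin k × Fin l) ℂ := α i₀ i₀ with hPdef
  have hP : P * P = P := by simpa using hmul i₀ i₀ i₀ i₀
  set V : Submodule ℂ (Fin k × Fin l → ℂ) := LinearMap.range P.mulVecLin with hVdef
  have hmemV : ∀ w : Fin k × Fin l → ℂ, P *ᵥ w ∈ V := fun w => ⟨w, rfl⟩
  have hfix : ∀ v ∈ V, P *ᵥ v = v := by
    rintro v ⟨w, rfl⟩
    show P *ᵥ (P *ᵥ w) = P *ᵥ w
    rw [mulVec_mulVec, hP]
  set Φ : (Fin k → V) →ₗ[ℂ] (Fin k × Fin l → ℂ) :=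
    ∑ i : Fin k, (α i i₀).mulVecLin ∘ₗ V.subtype ∘ₗ LinearMap.proj i with hΦdef
  have hΦapp : ∀ f : Fin k → V,
      Φ f = ∑ i : Fin k, α i i₀ *ᵥ ((f i : Fin k × Fin l → ℂ)) := by
    intro f
    simp [hΦdef, LinearMap.sum_apply]
  have hrec : ∀ (f : Fin k → V) (j : Fin k),
      ((f j : Fin k × Fin l → ℂ)) = α i₀ j *ᵥ Φ f := by
    intro f j
    rw [hΦapp, mulVec_matSum]
    have h1 : ∀ i : Fin k, α i₀ j *ᵥ (α i i₀ *ᵥ ((f i : Fin k × Fin l → ℂ)))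
        = if j = i then P *ᵥ ((f i : Fin k × Fin l → ℂ)) else 0 := by
      intro i
      rw [mulVec_mulVec, hmul]
      split <;> simp [hPdef]
    simp only [h1]
    rw [Finset.sum_ite_eq]
    simp [hfix _ (f j).2]
  have hΦinj : Function.Injective Φ := by
    intro f₁ f₂ h
    funext j
    exact Subtype.ext (by rw [hrec f₁ j, hrec f₂ j, h])
  have hΦsurj : Function.Surjective Φ := by
    intro v
    refine ⟨fun i => ⟨α i₀ i *ᵥ v, ?_⟩, ?_⟩
    · have : P *ᵥ (α i₀ i *ᵥ v) = α i₀ i *ᵥ v := by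
        rw [mulVec_mulVec, show P * α i₀ i = α i₀ i by simpa using hmul i₀ i₀ i₀ i]
      exact this ▸ hmemV _
    · rw [hΦapp]
      have h1 : ∀ i : Fin k, α i i₀ *ᵥ (α i₀ i *ᵥ v) = α i i *ᵥ v := by
        intro i
        rw [mulVec_mulVec, show α i i₀ * α i₀ i = α i i by simpa using hmul i i₀ i₀ i]
      simp only [h1]
      rw [← matSum_mulVec, hsum, one_mulVec]
  have hdim : Module.finrank ℂ V = l := by
    have h1 := (LinearEquiv.ofBijective Φ ⟨hΦinj, hΦsurj⟩).finrank_eq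
    rw [Module.finrank_pi_fintype, Module.finrank_fintype_fun_eq_card] at h1
    simp only [Finset.sum_const, Finset.card_univ, Fintype.card_fin, smul_eq_mul,
      Fintype.card_prod] at h1
    exact Nat.eq_of_mul_eq_mul_left (by omega) h1
  set b : Module.Basis (Fin l) ℂ V := Module.finBasisOfFinrankEq ℂ V hdim with hbdef
  set g : Matrix (Fin k × Fin l) (Fin k × Fin l) ℂ :=
    Matrix.of (fun p q => (α q.1 i₀ *ᵥ ((b q.2 : Fin k × Fin l → ℂ))) p) with hgdef
  have hgv : ∀ x : Fin k × Fin l → ℂ,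
      g *ᵥ x = Φ (fun r => ∑ m : Fin l, x (r, m) • b m) := by
    intro x
    rw [hΦapp]
    have hc : ∀ r : Fin k, ((∑ m : Fin l, x (r, m) • b m : V) : Fin k × Fin l → ℂ)
        = ∑ m : Fin l, x (r, m) • ((b m : Fin k × Fin l → ℂ)) := by
      intro r; push_cast; rfl
    funext p
    simp only [hc, mulVec_matSum]
    have hs : ∀ r m, α r i₀ *ᵥ (x (r, m) • ((b m : Fin k × Fin l → ℂ)))
        = x (r, m) • (α r i₀ *ᵥ ((b m : Fin k × Fin l → ℂ))) := by
      intro r m; exact (α r i₀).mulVecLin.map_smul _ _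
    simp only [hs]
    simp [hgdef, mulVec, dotProduct, Fintype.sum_prod_type, Finset.sum_apply, mul_comm]
  have hcol : ∀ (A : Matrix (Fin k × Fin l) (Fin k × Fin l) ℂ) (p q : Fin k × Fin l),
      (A * g) p q = (A *ᵥ (α q.1 i₀ *ᵥ ((b q.2 : Fin k × Fin l → ℂ)))) p := by
    intro A p q
    simp [hgdef, mul_apply, mulVec, dotProduct]
  have hmain : ∀ i j : Fin k,
      α i j * g = g * (Matrix.single i j 1 ⊗ₖ (1 : Matrix (Fin l) (Fin l) ℂ)) := by
    intro i j
    ext p q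
    rw [hcol, mulVec_mulVec, hmul]
    rw [mul_apply]
    rw [Fintype.sum_prod_type]
    have hterm : ∀ (a : Fin k) (c : Fin l),
        g p (a, c) * (Matrix.single i j 1 ⊗ₖ (1 : Matrix (Fin l) (Fin l) ℂ)) (a, c) q
        = if i = a then (if j = q.1 then (if c = q.2 then g p (a, c) else 0) else 0) else 0 := by
      intro a c
      simp only [kroneckerMap_apply, Matrix.single, of_apply, one_apply]
      by_cases h1 : i = a <;> by_cases h2 : j = q.1 <;> by_cases h3 : c = q.2 <;>
        simp [h1, h2, h3]
    simp only [hterm]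
    by_cases h2 : j = q.1
    · simp only [h2, if_true]
      have hinner : ∀ a : Fin k,
          (∑ c : Fin l, if i = a then if c = q.2 then g p (a, c) else 0 else 0)
          = if i = a then g p (a, q.2) else 0 := by
        intro a
        split
        · rw [Finset.sum_ite_eq']; simp
        · simp
      simp only [hinner]
      rw [Finset.sum_ite_eq]
      simp [hgdef]
    · simp [h2]
  have hginj : Function.Injective g.mulVec := by
    intro x y hxy
    have h2 : Φ (fun r => ∑ m : Fin l, x (r, m) • b m)
        = Φ (fun r => ∑ m : Fin l, y (r, m) • b m) := by
      rw [← hgv, ← hgv]; exact hxy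
    have h3 := hΦinj h2
    funext q
    have h4 := congrFun h3 q.1
    have h5 := congrArg (fun v : V => (b.repr v : Fin l → ℂ)) h4
    have h6 := congrFun h5 q.2
    simp only [Module.Basis.repr_sum_self] at h6
    simpa using h6
  obtain ⟨u, hu⟩ := Matrix.mulVec_injective_iff_isUnit.mp hginj
  refine ⟨u, fun i j => ?_⟩
  calc α i j = α i j * ((u : Matrix (Fin k × Fin l) (Fin k × Fin l) ℂ) * ↑u⁻¹) := by
        rw [u.mul_inv, mul_one]
    _ = (α i j * ↑u) * ↑u⁻¹ := by rw [mul_assoc]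
    _ = ((u : Matrix (Fin k × Fin l) (Fin k × Fin l) ℂ)
          * (Matrix.single i j 1 ⊗ₖ (1 : Matrix (Fin l) (Fin l) ℂ))) * ↑u⁻¹ := by
        rw [hu, hmain i j]
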